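/- Let s be the union of three geodesic segments [a,b], [b,c], [a,c] between three points a, b, c in the 2-sphere S², and let B be a connected component of S² ∖ s. Then the three interior angles of s measured with respect to B are either all ≤ π or all ≥ π; and if a, b, c do not lie on a common great circle, these inequalities are strict. -/

import Mathlib

open scoped RealInnerProductSpace

noncomputable section

/-- The unit 2-sphere in `ℝ³`. -/
def S2 : Set (EuclideanSpace ℝ (Fin 3)) := Metric.sphere 0 1

/-- Intrinsic (angular) distance between points of the unit sphere. -/
def sdist (x y : EuclideanSpace ℝ (Fin 3)) : ℝ := Real.arccos ⟪x, y⟫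

/-- The geodesic segment (minor great-circle arc) between two non-antipodal points of the unit
sphere: the set of points of the sphere lying metrically between them. -/
def sphSeg (x y : EuclideanSpace ℝ (Fin 3)) : Set (EuclideanSpace ℝ (Fin 3)) :=
  {p ∈ S2 | sdist x p + sdist p y = sdist x y}

/-- The unit tangent direction at `a` pointing towards `x` (for `a` on the unit sphere). -/
def tangentDir (a x : EuclideanSpace ℝ (Fin 3)) : EuclideanSpace ℝ (Fin 3) :=
  ‖x - ⟪a, x⟫ • a‖⁻¹ • (x - ⟪a, x⟫ • a)

/-- The (standard, `≤ π`) spherical angle at `a` between the segments `[a,b]` and `[a,c]`. -/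
def sphAngle (a b c : EuclideanSpace ℝ (Fin 3)) : ℝ :=
  InnerProductGeometry.angle (tangentDir a b) (tangentDir a c)

/-- The unit tangent direction at `a` bisecting the angle between `[a,b]` and `[a,c]`. -/
def bisectDir (a b c : EuclideanSpace ℝ (Fin 3)) : EuclideanSpace ℝ (Fin 3) :=
  ‖tangentDir a b + tangentDir a c‖⁻¹ • (tangentDir a b + tangentDir a c)

/-- `B` occupies the inner angular sector at `a` between the segments `[a,b]` and `[a,c]`:
points on the geodesic issuing from `a` in the bisecting direction, arbitrarily close to `a`,
belong to `B`. -/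
def InnerSide (B : Set (EuclideanSpace ℝ (Fin 3))) (a b c : EuclideanSpace ℝ (Fin 3)) : Prop :=
  ∀ δ > 0, ∃ t ∈ Set.Ioo (0 : ℝ) δ, Real.cos t • a + Real.sin t • bisectDir a b c ∈ B

open Classical in
/-- The angle at the vertex `a` between the segments `[a,b]` and `[a,c]`, measured with respect
to the region `B`: it equals the standard angle if `B` lies on the inner side at `a`, and the
reflex angle otherwise. -/
def angleWRT (B : Set (EuclideanSpace ℝ (Fin 3))) (a b c : EuclideanSpace ℝ (Fin 3)) : ℝ :=
  if InnerSide B a b c then sphAngle a b c else 2 * Real.pi - sphAngle a b c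


local notation "E3" => EuclideanSpace ℝ (Fin 3)

def cross3 (x y : E3) : E3 :=
  WithLp.toLp 2 ![x 1 * y 2 - x 2 * y 1, x 2 * y 0 - x 0 * y 2, x 0 * y 1 - x 1 * y 0]

lemma inner3 (x y : E3) : ⟪x, y⟫ = x 0 * y 0 + x 1 * y 1 + x 2 * y 2 := by
  simp [PiLp.inner_apply, Fin.sum_univ_three]; ring

lemma inner_cross_shift (q u v : E3) (s t : ℝ) :
    ⟪q, cross3 (u + s•q) (v + t•q)⟫ = ⟪q, cross3 u v⟫ := by
  simp [inner3, cross3, Fin.sum_univ_three, PiLp.add_apply, PiLp.smul_apply]; ring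

lemma gram3 (a x y : E3) (h1 : ⟪a,a⟫ = 1) (h2 : ⟪a,x⟫ = 0) (h3 : ⟪a,y⟫ = 0) :
    ⟪a, cross3 x y⟫^2 = ⟪x,x⟫*⟪y,y⟫ - ⟪x,y⟫^2 := by
  have key : ⟪a, cross3 x y⟫^2 =
      ⟪a,a⟫*(⟪x,x⟫*⟪y,y⟫ - ⟪x,y⟫^2) - ⟪a,x⟫*(⟪a,x⟫*⟪y,y⟫-⟪x,y⟫*⟪a,y⟫)
        + ⟪a,y⟫*(⟪a,x⟫*⟪x,y⟫-⟪x,x⟫*⟪a,y⟫) := by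
    simp only [inner3]; simp [cross3, Fin.sum_univ_three]; ring
  rw [key, h1, h2, h3]; ring

lemma lagrange3 (x y : E3) : ⟪cross3 x y, cross3 x y⟫ = ⟪x,x⟫*⟪y,y⟫ - ⟪x,y⟫^2 := by
  simp only [inner3]; simp [ cross3, Fin.sum_univ_three]; ring

lemma cyc3 (x y z : E3) : ⟪x, cross3 y z⟫ = ⟪y, cross3 z x⟫ := by
  simp [inner3, cross3, Fin.sum_univ_three]; ring

lemma inner_self_cross_left (x y : E3) : ⟪x, cross3 x y⟫ = 0 := by
  simp [inner3, cross3, Fin.sum_univ_three]; ring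

lemma inner_self_cross_right (y x : E3) : ⟪y, cross3 x y⟫ = 0 := by
  simp [inner3, cross3, Fin.sum_univ_three]; ring

lemma cross3_comb (a b : E3) (r s : ℝ) : ⟪a, cross3 b (r•a + s•b)⟫ = 0 := by
  simp [inner3, cross3, Fin.sum_univ_three, PiLp.add_apply, PiLp.smul_apply]; ring

lemma mem_S2 {x : E3} : x ∈ S2 ↔ ‖x‖ = 1 := by
  simp [S2, mem_sphere_zero_iff_norm]

lemma inner_self_S2 {x : E3} (hx : x ∈ S2) : ⟪x, x⟫ = 1 := by
  rw [real_inner_self_eq_norm_sq, mem_S2.1 hx]; norm_num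

lemma inner_le_one {x y : E3} (hx : x ∈ S2) (hy : y ∈ S2) : ⟪x, y⟫ ≤ 1 := by
  have := real_inner_le_norm x y
  rwa [mem_S2.1 hx, mem_S2.1 hy, one_mul] at this

lemma neg_one_le_inner {x y : E3} (hx : x ∈ S2) (hy : y ∈ S2) : -1 ≤ ⟪x, y⟫ := by
  have := real_inner_le_norm x (-y)
  rw [mem_S2.1 hx, norm_neg, mem_S2.1 hy, one_mul, inner_neg_right] at this
  linarith

lemma inner_lt_one {x y : E3} (hx : x ∈ S2) (hy : y ∈ S2) (hxy : x ≠ y) : ⟪x, y⟫ < 1 := by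
  rcases lt_or_eq_of_le (inner_le_one hx hy) with h | h
  · exact h
  · exfalso; apply hxy
    have : ⟪x - y, x - y⟫ = 0 := by
      simp only [inner_sub_left, inner_sub_right, inner_self_S2 hx, inner_self_S2 hy,
        real_inner_comm x y, h]
      ring
    have := inner_self_eq_zero.1 this
    rwa [sub_eq_zero] at this

lemma neg_one_lt_inner {x y : E3} (hx : x ∈ S2) (hy : y ∈ S2) (hxy : x ≠ -y) : -1 < ⟪x, y⟫ := by
  rcases lt_or_eq_of_le (neg_one_le_inner hx hy) with h | h
  · exact h
  · exfalso; apply hxy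
    have : ⟪x + y, x + y⟫ = 0 := by
      simp only [inner_add_left, inner_add_right, inner_self_S2 hx, inner_self_S2 hy,
        real_inner_comm x y, ← h]
      ring
    have := inner_self_eq_zero.1 this
    exact eq_neg_of_add_eq_zero_left this

-- tangent vector facts
lemma uvec_inner {a x : E3} (ha : a ∈ S2) :
    ⟪x - ⟪a,x⟫ • a, x - ⟪a,x⟫ • a⟫ = ⟪x,x⟫ - ⟪a,x⟫^2 := by
  have h := inner_self_S2 ha
  simp only [inner_sub_left, inner_sub_right, real_inner_smul_left, real_inner_smul_right,
    real_inner_comm a x] at *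
  rw [h]; ring
lemma uvec_norm_sq {a x : E3} (ha : a ∈ S2) (hx : x ∈ S2) :
    ‖x - ⟪a,x⟫ • a‖^2 = 1 - ⟪a,x⟫^2 := by
  rw [← real_inner_self_eq_norm_sq, uvec_inner ha, inner_self_S2 hx]

lemma uvec_norm_pos {a x : E3} (ha : a ∈ S2) (hx : x ∈ S2) (h1 : a ≠ x) (h2 : a ≠ -x) :
    0 < ‖x - ⟪a,x⟫ • a‖ := by
  have h3 := inner_lt_one ha hx h1
  have h4 := neg_one_lt_inner ha hx h2
  have h5 := uvec_norm_sq ha hx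
  nlinarith [norm_nonneg (x - ⟪a,x⟫ • a)]

lemma tangent_norm_one {a x : E3} (ha : a ∈ S2) (hx : x ∈ S2) (h1 : a ≠ x) (h2 : a ≠ -x) :
    ‖tangentDir a x‖ = 1 := by
  have := uvec_norm_pos ha hx h1 h2
  rw [tangentDir, norm_smul, norm_inv, norm_norm, inv_mul_cancel₀ this.ne']

lemma inner_tangent_self {a x : E3} (ha : a ∈ S2) : ⟪a, tangentDir a x⟫ = 0 := by
  rw [tangentDir, real_inner_smul_right, inner_sub_right, real_inner_smul_right,
    inner_self_S2 ha]
  ring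

lemma tangent_inner_self_sq {a x : E3} (ha : a ∈ S2) (hx : x ∈ S2) (h1 : a ≠ x) (h2 : a ≠ -x) :
    ⟪tangentDir a x, tangentDir a x⟫ = 1 := by
  rw [real_inner_self_eq_norm_sq, tangent_norm_one ha hx h1 h2]; norm_num

lemma geo_mem_S2 {a w : E3} (ha : a ∈ S2) (hw : ⟪w,w⟫ = 1) (ho : ⟪a,w⟫ = 0) (t : ℝ) :
    Real.cos t • a + Real.sin t • w ∈ S2 := by
  set p := Real.cos t • a + Real.sin t • w with hp
  have hwa : ⟪w,a⟫ = 0 := by rw [real_inner_comm]; exact ho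
  have hpp : ⟪p,p⟫ = 1 := by
    rw [hp]
    simp only [inner_add_left, inner_add_right, real_inner_smul_left, real_inner_smul_right,
      inner_self_S2 ha, hw, ho, hwa]
    nlinarith [Real.sin_sq_add_cos_sq t]
  rw [real_inner_self_eq_norm_sq] at hpp
  have hn := norm_nonneg p
  rw [mem_S2]
  nlinarith

lemma arc_mem_seg {a b : E3} (ha : a ∈ S2) (hb : b ∈ S2) (h1 : a ≠ b) (h2 : a ≠ -b)
    {t : ℝ} (ht : t ∈ Set.Ioo 0 (Real.arccos ⟪a,b⟫)) :
    Real.cos t • a + Real.sin t • tangentDir a b ∈ sphSeg a b := by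
  have hs1 : -1 < ⟪a,b⟫ := neg_one_lt_inner ha hb h2
  have hs2 : ⟪a,b⟫ < 1 := inner_lt_one ha hb h1
  have hθπ : Real.arccos ⟪a,b⟫ ≤ Real.pi := Real.arccos_le_pi _
  have hcosθ : Real.cos (Real.arccos ⟪a,b⟫) = ⟪a,b⟫ := Real.cos_arccos hs1.le hs2.le
  have hnusq : ‖b - ⟪a,b⟫ • a‖^2 = 1 - ⟪a,b⟫^2 := uvec_norm_sq ha hb
  have hnu : 0 < ‖b - ⟪a,b⟫ • a‖ := uvec_norm_pos ha hb h1 h2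
  have hsinθ : Real.sin (Real.arccos ⟪a,b⟫) = ‖b - ⟪a,b⟫ • a‖ := by
    rw [Real.sin_arccos, ← hnusq, Real.sqrt_sq hnu.le]
  have haw : ⟪a, tangentDir a b⟫ = 0 := inner_tangent_self ha
  have hww : ⟪tangentDir a b, tangentDir a b⟫ = 1 := tangent_inner_self_sq ha hb h1 h2
  have hwb : ⟪tangentDir a b, b⟫ = ‖b - ⟪a,b⟫ • a‖ := by
    rw [tangentDir, real_inner_smul_left, inner_sub_left, real_inner_smul_left,
      inner_self_S2 hb,
      show (1 : ℝ) - ⟪a,b⟫ * ⟪a,b⟫ = ‖b - ⟪a,b⟫ • a‖^2 by rw [hnusq]; ring,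
      sq, ← mul_assoc, inv_mul_cancel₀ hnu.ne', one_mul]
  have hap : ⟪a, Real.cos t • a + Real.sin t • tangentDir a b⟫ = Real.cos t := by
    rw [inner_add_right, real_inner_smul_right, real_inner_smul_right, inner_self_S2 ha, haw]
    ring
  have hpb : ⟪Real.cos t • a + Real.sin t • tangentDir a b, b⟫
      = Real.cos (Real.arccos ⟪a,b⟫ - t) := by
    rw [Real.cos_sub, hcosθ, hsinθ, inner_add_left, real_inner_smul_left, real_inner_smul_left,
      hwb]
    ring
  refine ⟨geo_mem_S2 ha hww haw t, ?_⟩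
  rw [sdist, sdist, sdist, hap, hpb, Real.arccos_cos ht.1.le (ht.2.le.trans hθπ),
    Real.arccos_cos (by linarith [ht.2]) (by linarith [ht.1, hθπ])]
  ring

lemma seg_sub_plane {x y q : E3} (hx : x ∈ S2) (hy : y ∈ S2) (hq : q ∈ sphSeg x y) :
    ⟪q, cross3 x y⟫ = 0 := by
  obtain ⟨hqS, hsum⟩ := hq
  have hA1 : -1 ≤ ⟪x,q⟫ := neg_one_le_inner hx hqS
  have hA2 : ⟪x,q⟫ ≤ 1 := inner_le_one hx hqS
  have hB1 : -1 ≤ ⟪q,y⟫ := neg_one_le_inner hqS hy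
  have hB2 : ⟪q,y⟫ ≤ 1 := inner_le_one hqS hy
  have hC1 : -1 ≤ ⟪x,y⟫ := neg_one_le_inner hx hy
  have hC2 : ⟪x,y⟫ ≤ 1 := inner_le_one hx hy
  have hC : ⟪x,y⟫ = ⟪x,q⟫ * ⟪q,y⟫ -
      Real.sqrt (1 - ⟪x,q⟫^2) * Real.sqrt (1 - ⟪q,y⟫^2) := by
    have h1 : Real.cos (sdist x q + sdist q y) = ⟪x,y⟫ := by
      rw [hsum, sdist, Real.cos_arccos hC1 hC2]
    rw [sdist, sdist, Real.cos_add, Real.cos_arccos hA1 hA2, Real.cos_arccos hB1 hB2,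
      Real.sin_arccos, Real.sin_arccos] at h1
    linarith
  set u := x - ⟪q,x⟫ • q with hu
  set v := y - ⟪q,y⟫ • q with hv
  have hqx : ⟪q,x⟫ = ⟪x,q⟫ := real_inner_comm x q
  have huu : ⟪u,u⟫ = 1 - ⟪x,q⟫^2 := by
    rw [hu, uvec_inner hqS, inner_self_S2 hx, hqx]
  have hvv : ⟪v,v⟫ = 1 - ⟪q,y⟫^2 := by
    rw [hv, uvec_inner hqS, inner_self_S2 hy]
  have hnu : ‖u‖ = Real.sqrt (1 - ⟪x,q⟫^2) := by
    rw [← huu, real_inner_self_eq_norm_sq, Real.sqrt_sq (norm_nonneg u)]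
  have hnv : ‖v‖ = Real.sqrt (1 - ⟪q,y⟫^2) := by
    rw [← hvv, real_inner_self_eq_norm_sq, Real.sqrt_sq (norm_nonneg v)]
  have huv : ⟪u,v⟫ = ⟪x,y⟫ - ⟪x,q⟫ * ⟪q,y⟫ := by
    rw [hu, hv]
    simp only [inner_sub_left, inner_sub_right, real_inner_smul_left, real_inner_smul_right,
      inner_self_S2 hqS, hqx, real_inner_comm q y]
    ring
  have hkey : ⟪u,v⟫ = -(‖u‖ * ‖v‖) := by rw [huv, hnu, hnv, hC]; ring
  have hsq : ⟪u,v⟫^2 = ⟪u,u⟫ * ⟪v,v⟫ := by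
    rw [hkey, real_inner_self_eq_norm_sq, real_inner_self_eq_norm_sq]; ring
  have hzero : ⟪cross3 u v, cross3 u v⟫ = 0 := by rw [lagrange3, hsq]; ring
  have hcv : cross3 u v = 0 := inner_self_eq_zero.1 hzero
  have hxd : x = u + ⟪q,x⟫ • q := by rw [hu]; abel
  have hyd : y = v + ⟪q,y⟫ • q := by rw [hv]; abel
  calc ⟪q, cross3 x y⟫ = ⟪q, cross3 (u + ⟪q,x⟫ • q) (v + ⟪q,y⟫ • q)⟫ := by
        rw [← hxd, ← hyd]
    _ = ⟪q, cross3 u v⟫ := inner_cross_shift q u v _ _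
    _ = 0 := by rw [hcv]; exact inner_zero_right q

lemma cross3_comb' (a b : E3) (s ρ t : ℝ) : ⟪a, cross3 b (s•a + ρ•(b - t•a))⟫ = 0 := by
  simp [inner3, cross3, Fin.sum_univ_three, PiLp.add_apply, PiLp.smul_apply, PiLp.sub_apply]
  ring

lemma uvec_eq_of_tangent_parallel {a b c : E3} (ha : a ∈ S2) (hb : b ∈ S2) (hc : c ∈ S2)
    (hab : a ≠ b) (hab' : a ≠ -b) (hac : a ≠ c) (hac' : a ≠ -c) {r : ℝ}
    (h : tangentDir a c = r • tangentDir a b) :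
    c - ⟪a,c⟫ • a = (‖c - ⟪a,c⟫ • a‖ * (r * ‖b - ⟪a,b⟫ • a‖⁻¹)) • (b - ⟪a,b⟫ • a) := by
  have huc := uvec_norm_pos ha hc hac hac'
  have := congrArg (fun z : E3 => ‖c - ⟪a,c⟫ • a‖ • z) h
  simpa only [tangentDir, smul_smul, mul_inv_cancel₀ huc.ne', one_smul] using this

lemma det_eq_zero_of_parallel {a b c : E3} (ha : a ∈ S2) (hb : b ∈ S2) (hc : c ∈ S2)
    (hab : a ≠ b) (hab' : a ≠ -b) (hac : a ≠ c) (hac' : a ≠ -c) {r : ℝ}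
    (h : tangentDir a c = r • tangentDir a b) : ⟪a, cross3 b c⟫ = 0 := by
  have h2 := uvec_eq_of_tangent_parallel ha hb hc hab hab' hac hac' h
  have hc' : c = ⟪a,c⟫ • a + (‖c - ⟪a,c⟫ • a‖ * (r * ‖b - ⟪a,b⟫ • a‖⁻¹)) • (b - ⟪a,b⟫ • a) := by
    rw [← h2]; abel
  rw [hc']
  exact cross3_comb' a b _ _ _

lemma inner_uvec_self {a x : E3} (ha : a ∈ S2) : ⟪a, x - ⟪a,x⟫ • a⟫ = 0 := by
  rw [inner_sub_right, real_inner_smul_right, inner_self_S2 ha]; ring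

lemma det_shift {a b c : E3} (ha : a ∈ S2) :
    ⟪a, cross3 b c⟫ = ⟪a, cross3 (b - ⟪a,b⟫ • a) (c - ⟪a,c⟫ • a)⟫ := by
  conv_lhs => rw [show b = (b - ⟪a,b⟫ • a) + ⟪a,b⟫ • a from by abel,
    show c = (c - ⟪a,c⟫ • a) + ⟪a,c⟫ • a from by abel]
  exact inner_cross_shift a _ _ _ _

lemma inner_tangent_tangent {a b c : E3} :
    ⟪tangentDir a b, tangentDir a c⟫
      = ‖b - ⟪a,b⟫ • a‖⁻¹ * (‖c - ⟪a,c⟫ • a‖⁻¹ * ⟪b - ⟪a,b⟫ • a, c - ⟪a,c⟫ • a⟫) := by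
  rw [tangentDir, tangentDir, real_inner_smul_left, real_inner_smul_right]

lemma tangent_dichotomy {a b c : E3} (ha : a ∈ S2) (hb : b ∈ S2) (hc : c ∈ S2)
    (hab : a ≠ b) (hab' : a ≠ -b) (hac : a ≠ c) (hac' : a ≠ -c)
    (hd : ⟪a, cross3 b c⟫ = 0) :
    tangentDir a c = tangentDir a b ∨ tangentDir a c = -tangentDir a b := by
  have hub := uvec_norm_pos ha hb hab hab'
  have huc := uvec_norm_pos ha hc hac hac'
  have hgram := gram3 a (b - ⟪a,b⟫ • a) (c - ⟪a,c⟫ • a) (inner_self_S2 ha)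
    (inner_uvec_self ha) (inner_uvec_self ha)
  rw [← det_shift ha, hd] at hgram
  have hbb : ⟪b - ⟪a,b⟫ • a, b - ⟪a,b⟫ • a⟫ = ‖b - ⟪a,b⟫ • a‖^2 := real_inner_self_eq_norm_sq _
  have hcc : ⟪c - ⟪a,c⟫ • a, c - ⟪a,c⟫ • a⟫ = ‖c - ⟪a,c⟫ • a‖^2 := real_inner_self_eq_norm_sq _
  have hsq : ⟪tangentDir a b, tangentDir a c⟫^2 = 1 := by
    rw [hbb, hcc] at hgram
    have h1 : ⟪b - ⟪a,b⟫ • a, c - ⟪a,c⟫ • a⟫^2 = ‖b - ⟪a,b⟫ • a‖^2 * ‖c - ⟪a,c⟫ • a‖^2 := by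
      nlinarith
    rw [inner_tangent_tangent, mul_pow, mul_pow, h1, inv_pow, inv_pow]
    rw [inv_mul_eq_div, inv_mul_eq_div]
    rw [div_eq_iff (by positivity), div_eq_iff (by positivity)]
    ring
  have htb : ⟪tangentDir a b, tangentDir a b⟫ = 1 := tangent_inner_self_sq ha hb hab hab'
  have htc : ⟪tangentDir a c, tangentDir a c⟫ = 1 := tangent_inner_self_sq ha hc hac hac'
  have : (⟪tangentDir a b, tangentDir a c⟫ - 1) * (⟪tangentDir a b, tangentDir a c⟫ + 1) = 0 := by
    nlinarith
  rcases mul_eq_zero.1 this with h | h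
  · left
    have hz : ⟪tangentDir a c - tangentDir a b, tangentDir a c - tangentDir a b⟫ = 0 := by
      simp only [inner_sub_left, inner_sub_right, htb, htc,
        real_inner_comm (tangentDir a b) (tangentDir a c)]
      linarith
    have := inner_self_eq_zero.1 hz
    rwa [sub_eq_zero] at this
  · right
    have hz : ⟪tangentDir a c + tangentDir a b, tangentDir a c + tangentDir a b⟫ = 0 := by
      simp only [inner_add_left, inner_add_right, htb, htc,
        real_inner_comm (tangentDir a b) (tangentDir a c)]
      linarith
    have := inner_self_eq_zero.1 hz
    exact eq_neg_of_add_eq_zero_left this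

lemma L1 (a b c : E3) (s : ℝ) : ⟪b - s•a, cross3 c a⟫ = ⟪a, cross3 b c⟫ := by
  simp [inner3, cross3, Fin.sum_univ_three, PiLp.sub_apply, PiLp.smul_apply]; ring
lemma L2 (a c : E3) (s : ℝ) : ⟪c - s•a, cross3 c a⟫ = 0 := by
  simp [inner3, cross3, Fin.sum_univ_three, PiLp.sub_apply, PiLp.smul_apply]; ring
lemma L3 (a b c : E3) (s : ℝ) : ⟪c - s•a, cross3 a b⟫ = ⟪a, cross3 b c⟫ := by
  simp [inner3, cross3, Fin.sum_univ_three, PiLp.sub_apply, PiLp.smul_apply]; ring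
lemma L4 (a b : E3) (s : ℝ) : ⟪b - s•a, cross3 a b⟫ = 0 := by
  simp [inner3, cross3, Fin.sum_univ_three, PiLp.sub_apply, PiLp.smul_apply]; ring
lemma anticomm_inner_cross (x u v : E3) : ⟪x, cross3 u v⟫ = -⟪x, cross3 v u⟫ := by
  simp [inner3, cross3, Fin.sum_univ_three]; ring

/-- The open triangular sector region determined by the triangle, on the side given by
the sign of the determinant. -/
def Uset (a b c : E3) : Set E3 :=
  {x | x ∈ S2 ∧ 0 < ⟪a, cross3 b c⟫ * ⟪x, cross3 b c⟫
    ∧ 0 < ⟪a, cross3 b c⟫ * ⟪x, cross3 c a⟫ ∧ 0 < ⟪a, cross3 b c⟫ * ⟪x, cross3 a b⟫}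

lemma Uset_cyc (a b c : E3) : Uset a b c = Uset b c a := by
  ext x
  simp only [Uset, Set.mem_setOf_eq, ← cyc3 a b c]
  tauto

def Cset (a b c : E3) : Set E3 :=
  {x | 0 < ⟪a, cross3 b c⟫ * ⟪x, cross3 b c⟫
    ∧ 0 < ⟪a, cross3 b c⟫ * ⟪x, cross3 c a⟫ ∧ 0 < ⟪a, cross3 b c⟫ * ⟪x, cross3 a b⟫}

lemma convex_halfGt (d : ℝ) (n : E3) : Convex ℝ {x : E3 | 0 < d * ⟪x, n⟫} := by
  have hlin : IsLinearMap ℝ (fun x : E3 => d * ⟪x, n⟫) := by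
    constructor
    · intro x y; rw [inner_add_left]; ring
    · intro r x; rw [real_inner_smul_left]; simp only [smul_eq_mul]; ring
  exact convex_halfSpace_gt hlin 0

lemma convex_Cset (a b c : E3) : Convex ℝ (Cset a b c) :=
  (convex_halfGt _ _).inter ((convex_halfGt _ _).inter (convex_halfGt _ _))

lemma Cset_ne_zero {a b c x : E3} (hx : x ∈ Cset a b c) : x ≠ 0 := by
  rintro rfl
  have := hx.1
  rw [inner_zero_left, mul_zero] at this
  exact lt_irrefl _ this

lemma Uset_eq_image (a b c : E3) : Uset a b c = (fun x : E3 => ‖x‖⁻¹ • x) '' Cset a b c := by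
  ext x
  constructor
  · rintro ⟨hS, h1, h2, h3⟩
    refine ⟨x, ⟨h1, h2, h3⟩, ?_⟩
    show ‖x‖⁻¹ • x = x
    rw [mem_S2.1 hS, inv_one, one_smul]
  · rintro ⟨y, hy, rfl⟩
    have hy0 : y ≠ 0 := Cset_ne_zero hy
    have hn : 0 < ‖y‖ := norm_pos_iff.2 hy0
    obtain ⟨h1, h2, h3⟩ := hy
    refine ⟨mem_S2.2 ?_, ?_, ?_, ?_⟩
    · rw [norm_smul, norm_inv, norm_norm, inv_mul_cancel₀ hn.ne']
    · rw [real_inner_smul_left,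
        show ⟪a, cross3 b c⟫ * (‖y‖⁻¹ * ⟪y, cross3 b c⟫)
          = ‖y‖⁻¹ * (⟪a, cross3 b c⟫ * ⟪y, cross3 b c⟫) from by ring]
      exact mul_pos (inv_pos.2 hn) h1
    · rw [real_inner_smul_left,
        show ⟪a, cross3 b c⟫ * (‖y‖⁻¹ * ⟪y, cross3 c a⟫)
          = ‖y‖⁻¹ * (⟪a, cross3 b c⟫ * ⟪y, cross3 c a⟫) from by ring]
      exact mul_pos (inv_pos.2 hn) h2
    · rw [real_inner_smul_left,
        show ⟪a, cross3 b c⟫ * (‖y‖⁻¹ * ⟪y, cross3 a b⟫)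
          = ‖y‖⁻¹ * (⟪a, cross3 b c⟫ * ⟪y, cross3 a b⟫) from by ring]
      exact mul_pos (inv_pos.2 hn) h3

lemma isPreconnected_Uset (a b c : E3) : IsPreconnected (Uset a b c) := by
  rw [Uset_eq_image]
  refine ((convex_Cset a b c).isPreconnected).image _ ?_
  refine ContinuousOn.smul (ContinuousOn.inv₀ continuous_norm.continuousOn ?_) continuousOn_id
  intro y hy
  exact (norm_pos_iff.2 (Cset_ne_zero hy)).ne'

lemma Uset_subset_compl {a b c : E3} (ha : a ∈ S2) (hb : b ∈ S2) (hc : c ∈ S2)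
    {s : Set (EuclideanSpace ℝ (Fin 3))}
    (hs : s = sphSeg a b ∪ sphSeg b c ∪ sphSeg a c) : Uset a b c ⊆ S2 \ s := by
  rintro x ⟨hS, h1, h2, h3⟩
  refine ⟨hS, ?_⟩
  rw [hs]
  rintro ((h | h) | h)
  · rw [seg_sub_plane ha hb h, mul_zero] at h3
    exact lt_irrefl _ h3
  · rw [seg_sub_plane hb hc h, mul_zero] at h1
    exact lt_irrefl _ h1
  · have := seg_sub_plane ha hc h
    rw [anticomm_inner_cross x c a, this, neg_zero, mul_zero] at h2
    exact lt_irrefl _ h2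

lemma arith_aux (D Kb t : ℝ) (hd2 : 0 < D^2) (hsin : 0 < Real.sin t)
    (hsle : Real.sin t ≤ t) (hcos : 1/2 ≤ Real.cos t)
    (ht : t < D^2/(2*(|D*Kb|+1))) : 0 < D * (Real.cos t * D + Real.sin t * Kb) := by
  have hM := abs_nonneg (D*Kb)
  have ht0 : 0 < t := lt_of_lt_of_le hsin hsle
  rw [lt_div_iff₀ (by linarith : (0:ℝ) < 2*(|D*Kb|+1))] at ht
  have h1 : Real.sin t * |D*Kb| ≤ t * |D*Kb| := mul_le_mul_of_nonneg_right hsle hM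
  have h2 : -(Real.sin t * |D*Kb|) ≤ Real.sin t * (D*Kb) := by
    nlinarith [neg_abs_le (D*Kb)]
  have hgoal : D * (Real.cos t * D + Real.sin t * Kb)
      = Real.cos t * D^2 + Real.sin t * (D*Kb) := by ring
  rw [hgoal]
  nlinarith

lemma bisect_in_Uset {a b c : E3} (ha : a ∈ S2) (hb : b ∈ S2) (hc : c ∈ S2)
    (hab : a ≠ b) (hab' : a ≠ -b) (hac : a ≠ c) (hac' : a ≠ -c)
    (hd : ⟪a, cross3 b c⟫ ≠ 0) :
    ∃ δ > 0, ∀ t ∈ Set.Ioo (0:ℝ) δ,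
      Real.cos t • a + Real.sin t • bisectDir a b c ∈ Uset a b c := by
  have hub := uvec_norm_pos ha hb hab hab'
  have huc := uvec_norm_pos ha hc hac hac'
  have hd2 : 0 < ⟪a, cross3 b c⟫^2 :=
    lt_of_le_of_ne (sq_nonneg _) (Ne.symm (pow_ne_zero 2 hd))
  have hT : tangentDir a b + tangentDir a c ≠ 0 := by
    intro h0
    have h1 : tangentDir a c = (-1 : ℝ) • tangentDir a b := by
      rw [neg_one_smul]; exact eq_neg_of_add_eq_zero_right h0
    exact hd (det_eq_zero_of_parallel ha hb hc hab hab' hac hac' h1)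
  have hTn : 0 < ‖tangentDir a b + tangentDir a c‖ := norm_pos_iff.2 hT
  have haw : ⟪a, bisectDir a b c⟫ = 0 := by
    rw [bisectDir, real_inner_smul_right, inner_add_right, inner_tangent_self ha,
      inner_tangent_self ha]
    ring
  have hww : ⟪bisectDir a b c, bisectDir a b c⟫ = 1 := by
    rw [real_inner_self_eq_norm_sq, bisectDir, norm_smul, norm_inv, norm_norm,
      inv_mul_cancel₀ hTn.ne']
    norm_num
  have hw2 : ⟪bisectDir a b c, cross3 c a⟫
      = ‖tangentDir a b + tangentDir a c‖⁻¹ * (‖b - ⟪a,b⟫ • a‖⁻¹ * ⟪a, cross3 b c⟫) := by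
    rw [bisectDir, real_inner_smul_left, inner_add_left]
    congr 1
    rw [tangentDir, tangentDir, real_inner_smul_left, real_inner_smul_left,
      L1 a b c, L2 a c, mul_zero, add_zero]
  have hw3 : ⟪bisectDir a b c, cross3 a b⟫
      = ‖tangentDir a b + tangentDir a c‖⁻¹ * (‖c - ⟪a,c⟫ • a‖⁻¹ * ⟪a, cross3 b c⟫) := by
    rw [bisectDir, real_inner_smul_left, inner_add_left]
    congr 1
    rw [tangentDir, tangentDir, real_inner_smul_left, real_inner_smul_left,
      L3 a b c, L4 a b, mul_zero, zero_add]
  set K := ⟪a, cross3 b c⟫ * ⟪bisectDir a b c, cross3 b c⟫ with hK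
  refine ⟨min (Real.pi/4) (⟪a, cross3 b c⟫^2/(2*(|K|+1))), ?_, ?_⟩
  · apply lt_min
    · linarith [Real.pi_pos]
    · apply div_pos hd2
      have := abs_nonneg K
      linarith
  intro t ht
  obtain ⟨ht0, ht1⟩ := ht
  have htpi4 : t < Real.pi/4 := lt_of_lt_of_le ht1 (min_le_left _ _)
  have hsin : 0 < Real.sin t :=
    Real.sin_pos_of_pos_of_lt_pi ht0 (by linarith [Real.pi_pos, htpi4])
  have hcos : 1/2 ≤ Real.cos t := by
    have h1 : Real.cos (Real.pi/4) ≤ Real.cos t :=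
      Real.cos_le_cos_of_nonneg_of_le_pi ht0.le (by linarith [Real.pi_pos]) htpi4.le
    rw [Real.cos_pi_div_four] at h1
    have h2 : (1:ℝ) ≤ Real.sqrt 2 := by
      nlinarith [Real.sq_sqrt (by norm_num : (0:ℝ) ≤ 2), Real.sqrt_nonneg 2]
    linarith
  have hx1 : ⟪Real.cos t • a + Real.sin t • bisectDir a b c, cross3 b c⟫
      = Real.cos t * ⟪a, cross3 b c⟫ + Real.sin t * ⟪bisectDir a b c, cross3 b c⟫ := by
    rw [inner_add_left, real_inner_smul_left, real_inner_smul_left]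
  have hx2 : ⟪Real.cos t • a + Real.sin t • bisectDir a b c, cross3 c a⟫
      = Real.sin t * ⟪bisectDir a b c, cross3 c a⟫ := by
    rw [inner_add_left, real_inner_smul_left, real_inner_smul_left,
      inner_self_cross_right a c, mul_zero, zero_add]
  have hx3 : ⟪Real.cos t • a + Real.sin t • bisectDir a b c, cross3 a b⟫
      = Real.sin t * ⟪bisectDir a b c, cross3 a b⟫ := by
    rw [inner_add_left, real_inner_smul_left, real_inner_smul_left,
      inner_self_cross_left a b, mul_zero, zero_add]
  refine ⟨geo_mem_S2 ha hww haw t, ?_, ?_, ?_⟩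
  · rw [hx1]
    have hta : t < ⟪a, cross3 b c⟫^2/(2*(|K|+1)) := lt_of_lt_of_le ht1 (min_le_right _ _)
    rw [hK] at hta
    exact arith_aux _ _ t hd2 hsin (Real.sin_le ht0.le) hcos hta
  · rw [hx2, hw2,
      show ⟪a, cross3 b c⟫ * (Real.sin t * (‖tangentDir a b + tangentDir a c‖⁻¹ * (‖b - ⟪a,b⟫ • a‖⁻¹ * ⟪a, cross3 b c⟫)))
        = Real.sin t * (‖tangentDir a b + tangentDir a c‖⁻¹ * (‖b - ⟪a,b⟫ • a‖⁻¹ * ⟪a, cross3 b c⟫^2)) from by ring]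
    exact mul_pos hsin (mul_pos (inv_pos.2 hTn) (mul_pos (inv_pos.2 hub) hd2))
  · rw [hx3, hw3,
      show ⟪a, cross3 b c⟫ * (Real.sin t * (‖tangentDir a b + tangentDir a c‖⁻¹ * (‖c - ⟪a,c⟫ • a‖⁻¹ * ⟪a, cross3 b c⟫)))
        = Real.sin t * (‖tangentDir a b + tangentDir a c‖⁻¹ * (‖c - ⟪a,c⟫ • a‖⁻¹ * ⟪a, cross3 b c⟫^2)) from by ring]
    exact mul_pos hsin (mul_pos (inv_pos.2 hTn) (mul_pos (inv_pos.2 huc) hd2))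

lemma sdist_comm (x y : E3) : sdist x y = sdist y x := by
  rw [sdist, sdist, real_inner_comm]

lemma sphSeg_comm (x y : E3) : sphSeg x y = sphSeg y x := by
  ext p
  constructor <;> rintro ⟨h1, h2⟩ <;> refine ⟨h1, ?_⟩
  · rw [sdist_comm y p, sdist_comm p x, sdist_comm y x]; linarith
  · rw [sdist_comm x p, sdist_comm p y, sdist_comm x y]; linarith

lemma innerSide_comm (B : Set (EuclideanSpace ℝ (Fin 3))) (a b c : E3) :
    InnerSide B a b c ↔ InnerSide B a c b := by
  unfold InnerSide bisectDir
  rw [add_comm]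

lemma sphAngle_le_pi (a b c : E3) : sphAngle a b c ≤ Real.pi :=
  InnerProductGeometry.angle_le_pi _ _

lemma sphAngle_comm (a b c : E3) : sphAngle a b c = sphAngle a c b :=
  InnerProductGeometry.angle_comm _ _

lemma sphAngle_lt_pi_of_det {a b c : E3} (ha : a ∈ S2) (hb : b ∈ S2) (hc : c ∈ S2)
    (hab : a ≠ b) (hab' : a ≠ -b) (hac : a ≠ c) (hac' : a ≠ -c)
    (hd : ⟪a, cross3 b c⟫ ≠ 0) : sphAngle a b c < Real.pi := by
  rw [sphAngle]
  rcases lt_or_eq_of_le (InnerProductGeometry.angle_le_pi (tangentDir a b) (tangentDir a c))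
    with h | h
  · exact h
  · exfalso
    obtain ⟨_, r, hr, hy⟩ := InnerProductGeometry.angle_eq_pi_iff.1 h
    exact hd (det_eq_zero_of_parallel ha hb hc hab hab' hac hac' hy)

lemma not_innerSide_of_det_zero {a b c : E3} (ha : a ∈ S2) (hb : b ∈ S2) (hc : c ∈ S2)
    (hab : a ≠ b) (hab' : a ≠ -b) (hac : a ≠ c) (hac' : a ≠ -c)
    (hd : ⟪a, cross3 b c⟫ = 0) {s B : Set (EuclideanSpace ℝ (Fin 3))}
    (hsegb : sphSeg a b ⊆ s) (hB : B ⊆ S2 \ s) : ¬ InnerSide B a b c := by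
  rcases tangent_dichotomy ha hb hc hab hab' hac hac' hd with h | h
  · have hw : bisectDir a b c = tangentDir a b := by
      rw [bisectDir, h, ← two_smul ℝ (tangentDir a b), norm_smul,
        tangent_norm_one ha hb hab hab', smul_smul]
      norm_num
    intro hIS
    obtain ⟨t, ht, htB⟩ := hIS (Real.arccos ⟪a,b⟫) (Real.arccos_pos.2 (inner_lt_one ha hb hab))
    rw [hw] at htB
    exact (hB htB).2 (hsegb (arc_mem_seg ha hb hab hab' ht))
  · have hw : bisectDir a b c = 0 := by
      rw [bisectDir, h]
      simp
    intro hIS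
    obtain ⟨t, ht, htB⟩ := hIS (Real.pi/2) (by linarith [Real.pi_pos])
    rw [hw, smul_zero, add_zero] at htB
    have h1 : Real.cos t < 1 := by
      have h2 := Real.cos_lt_cos_of_nonneg_of_le_pi (le_refl 0)
        (by linarith [Real.pi_pos, ht.2] : t ≤ Real.pi) ht.1
      rwa [Real.cos_zero] at h2
    have h3 := (hB htB).1
    rw [mem_S2, norm_smul, mem_S2.1 ha, mul_one, Real.norm_eq_abs,
      abs_of_pos (Real.cos_pos_of_mem_Ioo ⟨by linarith [Real.pi_pos, ht.1], ht.2⟩)] at h3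
    linarith

lemma coplanar_of_parallel {a b c : E3} (ha : a ∈ S2) (hb : b ∈ S2) (hc : c ∈ S2)
    (hab : a ≠ b) (hab' : a ≠ -b) (hac : a ≠ c) (hac' : a ≠ -c) {r : ℝ}
    (h : tangentDir a c = r • tangentDir a b) :
    Coplanar ℝ ({0, a, b, c} : Set (EuclideanSpace ℝ (Fin 3))) := by
  have h2 := uvec_eq_of_tangent_parallel ha hb hc hab hab' hac hac' h
  set ρ := ‖c - ⟪a,c⟫ • a‖ * (r * ‖b - ⟪a,b⟫ • a‖⁻¹) with hρ
  have hc' : c = (⟪a,c⟫ - ρ*⟪a,b⟫) • a + ρ • b := by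
    have h3 : c - ⟪a,c⟫ • a = ρ • (b - ⟪a,b⟫ • a) := h2
    linear_combination (norm := module) h3
  have hW : ∀ x ∈ ({0, a, b, c} : Set (EuclideanSpace ℝ (Fin 3))),
      x ∈ Submodule.span ℝ ({a, b} : Set (EuclideanSpace ℝ (Fin 3))) := by
    rintro x (rfl | rfl | rfl | rfl)
    · exact Submodule.zero_mem _
    · exact Submodule.subset_span (by simp)
    · exact Submodule.subset_span (by simp)
    · rw [hc']
      exact Submodule.add_mem _
        (Submodule.smul_mem _ _ (Submodule.subset_span (by simp)))
        (Submodule.smul_mem _ _ (Submodule.subset_span (by simp)))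
  have hle : vectorSpan ℝ ({0, a, b, c} : Set (EuclideanSpace ℝ (Fin 3)))
      ≤ Submodule.span ℝ ({a, b} : Set (EuclideanSpace ℝ (Fin 3))) := by
    rw [vectorSpan_def, Submodule.span_le]
    rintro v ⟨x, hx, y, hy, rfl⟩
    exact Submodule.sub_mem _ (hW x hx) (hW y hy)
  show Module.rank ℝ _ ≤ 2
  refine le_trans (Submodule.rank_mono hle) (le_trans (rank_span_le _) ?_)
  refine le_trans Cardinal.mk_insert_le ?_
  rw [Cardinal.mk_singleton]
  exact le_of_eq one_add_one_eq_two

lemma coplanar_of_det_zero {a b c : E3} (ha : a ∈ S2) (hb : b ∈ S2) (hc : c ∈ S2)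
    (hab : a ≠ b) (hab' : a ≠ -b) (hac : a ≠ c) (hac' : a ≠ -c)
    (hd : ⟪a, cross3 b c⟫ = 0) :
    Coplanar ℝ ({0, a, b, c} : Set (EuclideanSpace ℝ (Fin 3))) := by
  rcases tangent_dichotomy ha hb hc hab hab' hac hac' hd with h | h
  · exact coplanar_of_parallel ha hb hc hab hab' hac hac'
      (show tangentDir a c = (1:ℝ) • tangentDir a b by rw [one_smul]; exact h)
  · exact coplanar_of_parallel ha hb hc hab hab' hac hac'
      (show tangentDir a c = (-1:ℝ) • tangentDir a b by rw [neg_one_smul]; exact h)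

lemma innerSide_iff_eq {a b c x₀ p₀ : E3} {s B : Set (EuclideanSpace ℝ (Fin 3))}
    (ha : a ∈ S2) (hb : b ∈ S2) (hc : c ∈ S2)
    (hab : a ≠ b) (hab' : a ≠ -b) (hac : a ≠ c) (hac' : a ≠ -c)
    (hd : ⟪a, cross3 b c⟫ ≠ 0)
    (hUI : Uset a b c ⊆ connectedComponentIn (S2 \ s) p₀)
    (hB : B = connectedComponentIn (S2 \ s) x₀) :
    (InnerSide B a b c ↔ B = connectedComponentIn (S2 \ s) p₀) := by
  obtain ⟨δ, hδ, hmem⟩ := bisect_in_Uset ha hb hc hab hab' hac hac' hd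
  constructor
  · intro hIS
    obtain ⟨t, ht, htB⟩ := hIS δ hδ
    have htI := hUI (hmem t ht)
    rw [hB] at htB ⊢
    rw [connectedComponentIn_eq htB, connectedComponentIn_eq htI]
  · intro hBI δ' hδ'
    refine ⟨min δ' δ / 2, ⟨half_pos (lt_min hδ' hδ), ?_⟩, ?_⟩
    · have := min_le_left δ' δ; linarith
    · have htU := hmem (min δ' δ / 2)
        ⟨half_pos (lt_min hδ' hδ), by have := min_le_right δ' δ; linarith⟩
      rw [hBI]
      exact hUI htU

/-- **Angles of a spherical triangle with respect to a complementary region.**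
Let `s` be the union of the three geodesic segments `[a,b]`, `[b,c]`, `[a,c]` joining three
points `a, b, c` of the unit sphere (pairwise distinct and non-antipodal), and let `B` be a
connected component of `S² ∖ s`.  Then the three angles of `s` measured with respect to `B`
are either all `≤ π` or all `≥ π`; and if `a, b, c` do not lie on a common great circle, these
inequalities are strict. -/
theorem triangle_angles_wrt_component (a b c : EuclideanSpace ℝ (Fin 3))
    (ha : a ∈ S2) (hb : b ∈ S2) (hc : c ∈ S2)
    (hab : a ≠ b) (hab' : a ≠ -b) (hbc : b ≠ c) (hbc' : b ≠ -c) (hac : a ≠ c) (hac' : a ≠ -c)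
    (s B : Set (EuclideanSpace ℝ (Fin 3)))
    (hs : s = sphSeg a b ∪ sphSeg b c ∪ sphSeg a c)
    (x₀ : EuclideanSpace ℝ (Fin 3)) (hx₀ : x₀ ∈ S2 \ s)
    (hB : B = connectedComponentIn (S2 \ s) x₀) :
    ((angleWRT B a b c ≤ Real.pi ∧ angleWRT B b a c ≤ Real.pi ∧ angleWRT B c a b ≤ Real.pi) ∨
      (Real.pi ≤ angleWRT B a b c ∧ Real.pi ≤ angleWRT B b a c ∧
        Real.pi ≤ angleWRT B c a b)) ∧
      (¬ Coplanar ℝ ({0, a, b, c} : Set (EuclideanSpace ℝ (Fin 3))) →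
        (angleWRT B a b c < Real.pi ∧ angleWRT B b a c < Real.pi ∧
            angleWRT B c a b < Real.pi) ∨
          (Real.pi < angleWRT B a b c ∧ Real.pi < angleWRT B b a c ∧
            Real.pi < angleWRT B c a b)) := by
  classical
  have hba : b ≠ a := Ne.symm hab
  have hba' : b ≠ -a := fun h => hab' (by rw [h, neg_neg])
  have hca : c ≠ a := Ne.symm hac
  have hca' : c ≠ -a := fun h => hac' (by rw [h, neg_neg])
  have hcb : c ≠ b := Ne.symm hbc
  have hcb' : c ≠ -b := fun h => hbc' (by rw [h, neg_neg])
  have hB' : B ⊆ S2 \ s := by rw [hB]; exact connectedComponentIn_subset _ _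
  have hsegab : sphSeg a b ⊆ s := by rw [hs]; intro x hx; exact Or.inl (Or.inl hx)
  have hsegbc : sphSeg b c ⊆ s := by rw [hs]; intro x hx; exact Or.inl (Or.inr hx)
  have hsegac : sphSeg a c ⊆ s := by rw [hs]; intro x hx; exact Or.inr hx
  have hsegca : sphSeg c a ⊆ s := by rw [sphSeg_comm]; exact hsegac
  by_cases hd : ⟪a, cross3 b c⟫ = 0
  · -- degenerate case: all angles are the reflex ones, all ≥ π
    have hd_b : ⟪b, cross3 c a⟫ = 0 := by rw [← cyc3 a b c]; exact hd
    have hd_c : ⟪c, cross3 a b⟫ = 0 := by rw [← cyc3 b c a, ← cyc3 a b c]; exact hd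
    have hnot1 : ¬ InnerSide B a b c :=
      not_innerSide_of_det_zero ha hb hc hab hab' hac hac' hd hsegab hB'
    have hnot2 : ¬ InnerSide B b a c := by
      rw [innerSide_comm]
      exact not_innerSide_of_det_zero hb hc ha hbc hbc' hba hba' hd_b hsegbc hB'
    have hnot3 : ¬ InnerSide B c a b :=
      not_innerSide_of_det_zero hc ha hb hca hca' hcb hcb' hd_c hsegca hB'
    have e1 : angleWRT B a b c = 2 * Real.pi - sphAngle a b c := if_neg hnot1
    have e2 : angleWRT B b a c = 2 * Real.pi - sphAngle b a c := if_neg hnot2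
    have e3 : angleWRT B c a b = 2 * Real.pi - sphAngle c a b := if_neg hnot3
    constructor
    · right
      refine ⟨?_, ?_, ?_⟩
      · rw [e1]; linarith [sphAngle_le_pi a b c]
      · rw [e2]; linarith [sphAngle_le_pi b a c]
      · rw [e3]; linarith [sphAngle_le_pi c a b]
    · intro hncop
      exact absurd (coplanar_of_det_zero ha hb hc hab hab' hac hac' hd) hncop
  · -- nondegenerate case
    obtain ⟨δa, hδa, hmema⟩ := bisect_in_Uset ha hb hc hab hab' hac hac' hd
    set p₀ := Real.cos (δa/2) • a + Real.sin (δa/2) • bisectDir a b c with hp₀def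
    have hp₀ : p₀ ∈ Uset a b c := hmema _ ⟨half_pos hδa, half_lt_self hδa⟩
    have hsub : Uset a b c ⊆ S2 \ s := Uset_subset_compl ha hb hc hs
    have hUI : Uset a b c ⊆ connectedComponentIn (S2 \ s) p₀ :=
      (isPreconnected_Uset a b c).subset_connectedComponentIn hp₀ hsub
    have hd_b : ⟪b, cross3 c a⟫ ≠ 0 := by rw [← cyc3 a b c]; exact hd
    have hd_c : ⟪c, cross3 a b⟫ ≠ 0 := by rw [← cyc3 b c a, ← cyc3 a b c]; exact hd
    have hcyc1 : Uset b c a = Uset a b c := (Uset_cyc a b c).symm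
    have hcyc2 : Uset c a b = Uset a b c := by
      rw [← Uset_cyc b c a, ← Uset_cyc a b c]
    have hUI_b : Uset b c a ⊆ connectedComponentIn (S2 \ s) p₀ := by rw [hcyc1]; exact hUI
    have hUI_c : Uset c a b ⊆ connectedComponentIn (S2 \ s) p₀ := by rw [hcyc2]; exact hUI
    have hiff1 : InnerSide B a b c ↔ B = connectedComponentIn (S2 \ s) p₀ :=
      innerSide_iff_eq ha hb hc hab hab' hac hac' hd hUI hB
    have hiff2 : InnerSide B b a c ↔ B = connectedComponentIn (S2 \ s) p₀ := by
      rw [innerSide_comm]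
      exact innerSide_iff_eq hb hc ha hbc hbc' hba hba' hd_b hUI_b hB
    have hiff3 : InnerSide B c a b ↔ B = connectedComponentIn (S2 \ s) p₀ :=
      innerSide_iff_eq hc ha hb hca hca' hcb hcb' hd_c hUI_c hB
    have hang1 : sphAngle a b c < Real.pi :=
      sphAngle_lt_pi_of_det ha hb hc hab hab' hac hac' hd
    have hang2 : sphAngle b a c < Real.pi := by
      rw [sphAngle_comm]
      exact sphAngle_lt_pi_of_det hb hc ha hbc hbc' hba hba' hd_b
    have hang3 : sphAngle c a b < Real.pi :=
      sphAngle_lt_pi_of_det hc ha hb hca hca' hcb hcb' hd_c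
    by_cases hBI : B = connectedComponentIn (S2 \ s) p₀
    · have e1 : angleWRT B a b c = sphAngle a b c := if_pos (hiff1.2 hBI)
      have e2 : angleWRT B b a c = sphAngle b a c := if_pos (hiff2.2 hBI)
      have e3 : angleWRT B c a b = sphAngle c a b := if_pos (hiff3.2 hBI)
      constructor
      · left
        exact ⟨by rw [e1]; linarith, by rw [e2]; linarith, by rw [e3]; linarith⟩
      · intro _
        left
        exact ⟨by rw [e1]; linarith, by rw [e2]; linarith, by rw [e3]; linarith⟩
    · have e1 : angleWRT B a b c = 2 * Real.pi - sphAngle a b c :=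
        if_neg (fun h => hBI (hiff1.1 h))
      have e2 : angleWRT B b a c = 2 * Real.pi - sphAngle b a c :=
        if_neg (fun h => hBI (hiff2.1 h))
      have e3 : angleWRT B c a b = 2 * Real.pi - sphAngle c a b :=
        if_neg (fun h => hBI (hiff3.1 h))
      constructor
      · right
        exact ⟨by rw [e1]; linarith, by rw [e2]; linarith, by rw [e3]; linarith⟩
      · intro _
        right
        exact ⟨by rw [e1]; linarith, by rw [e2]; linarith, by rw [e3]; linarith⟩

end
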